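/- For the on-off channel, the capacity with causal transmitter side information is upper bounded by p_on·C_Sm(√E): C ≤ p_on·C_Sm(√E). -/

import Mathlib

open MeasureTheory Real Set

/-- The standard Gaussian density. -/
noncomputable def φ (x : ℝ) : ℝ := (Real.sqrt (2 * π))⁻¹ * Real.exp (-x ^ 2 / 2)

/-- Mutual information of an input measure `μ` through the channel with conditional
output density `g y t`. -/
noncomputable def MI (μ : Measure ℝ) (g : ℝ → ℝ → ℝ) : ℝ :=
  ∫ t, (∫ y : ℝ, g y t * Real.log (g y t / ∫ s, g y s ∂μ)) ∂μ

/-- Smith's amplitude-constrained AWGN capacity under amplitude constraint `a`. -/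
noncomputable def CSm (a : ℝ) : ℝ :=
  sSup {x : ℝ | ∃ F : Measure ℝ, IsProbabilityMeasure F ∧ F (Icc (-a) a) = 1 ∧
    x = MI F (fun y t => φ (y - t))}

/-! ### Auxiliary lemmas -/

noncomputable def hdom (a y : ℝ) : ℝ :=
  2 * (Real.sqrt (2 * π))⁻¹ * Real.exp (a ^ 2) * ((y ^ 2 + a ^ 2) * Real.exp (-(1/4) * y ^ 2))

lemma sqrt2pi_pos : 0 < Real.sqrt (2 * π) := Real.sqrt_pos.2 (by positivity)

lemma c0_pos : 0 < (Real.sqrt (2 * π))⁻¹ := inv_pos.2 sqrt2pi_pos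

lemma phi_pos (x : ℝ) : 0 < φ x := mul_pos c0_pos (Real.exp_pos _)

lemma phi_le (x : ℝ) : φ x ≤ (Real.sqrt (2 * π))⁻¹ := by
  have h : Real.exp (-x ^ 2 / 2) ≤ 1 := Real.exp_le_one_iff.2 (by nlinarith [sq_nonneg x])
  calc φ x ≤ (Real.sqrt (2 * π))⁻¹ * 1 :=
        mul_le_mul_of_nonneg_left h c0_pos.le
    _ = (Real.sqrt (2 * π))⁻¹ := mul_one _

lemma phi_cont : Continuous φ := by
  unfold φ; fun_prop

lemma phi_anti {x z : ℝ} (h : x ^ 2 ≤ z ^ 2) : φ z ≤ φ x :=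
  mul_le_mul_of_nonneg_left (Real.exp_le_exp.2 (by linarith)) c0_pos.le

lemma log_phi (x : ℝ) :
    Real.log (φ x) = Real.log ((Real.sqrt (2 * π))⁻¹) - x ^ 2 / 2 := by
  rw [φ, Real.log_mul (ne_of_gt c0_pos) (Real.exp_ne_zero _), Real.log_exp]; ring

lemma log_phi_bounds {a y g : ℝ} (h1 : φ (|y| + a) ≤ g) (h2 : g ≤ (Real.sqrt (2 * π))⁻¹) :
    Real.log ((Real.sqrt (2 * π))⁻¹) - (|y| + a) ^ 2 / 2 ≤ Real.log g ∧
      Real.log g ≤ Real.log ((Real.sqrt (2 * π))⁻¹) := by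
  have hgpos : 0 < g := lt_of_lt_of_le (phi_pos _) h1
  constructor
  · have := Real.log_le_log (phi_pos (|y| + a)) h1
    rwa [log_phi] at this
  · exact Real.log_le_log hgpos h2

lemma logdiff {a y g b : ℝ} (hg1 : φ (|y| + a) ≤ g) (hg2 : g ≤ (Real.sqrt (2 * π))⁻¹)
    (hb1 : φ (|y| + a) ≤ b) (hb2 : b ≤ (Real.sqrt (2 * π))⁻¹) :
    |Real.log (g / b)| ≤ (|y| + a) ^ 2 / 2 := by
  have hgpos : 0 < g := lt_of_lt_of_le (phi_pos _) hg1
  have hbpos : 0 < b := lt_of_lt_of_le (phi_pos _) hb1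
  obtain ⟨hG1, hG2⟩ := log_phi_bounds hg1 hg2
  obtain ⟨hB1, hB2⟩ := log_phi_bounds hb1 hb2
  rw [Real.log_div (ne_of_gt hgpos) (ne_of_gt hbpos), abs_le]
  constructor <;> linarith

lemma integrand_bound {a y g b : ℝ} (ha : 0 ≤ a)
    (hg1 : φ (|y| + a) ≤ g)
    (hgd : g ≤ (Real.sqrt (2 * π))⁻¹ * Real.exp (a ^ 2) * Real.exp (-(1/4) * y ^ 2))
    (hg2 : g ≤ (Real.sqrt (2 * π))⁻¹)
    (hb1 : φ (|y| + a) ≤ b) (hb2 : b ≤ (Real.sqrt (2 * π))⁻¹) :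
    |g * Real.log (g / b)| ≤ hdom a y := by
  have hgpos : 0 < g := lt_of_lt_of_le (phi_pos _) hg1
  have L := logdiff hg1 hg2 hb1 hb2
  have h1 : |g * Real.log (g / b)| = g * |Real.log (g / b)| := by
    rw [abs_mul, abs_of_pos hgpos]
  rw [h1]
  have hX : (0:ℝ) ≤ (Real.sqrt (2 * π))⁻¹ * Real.exp (a ^ 2) * Real.exp (-(1/4) * y ^ 2) := by
    positivity
  have h2 : g * |Real.log (g / b)| ≤
      ((Real.sqrt (2 * π))⁻¹ * Real.exp (a ^ 2) * Real.exp (-(1/4) * y ^ 2)) *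
        ((|y| + a) ^ 2 / 2) :=
    mul_le_mul hgd L (abs_nonneg _) hX
  refine h2.trans ?_
  unfold hdom
  have h3 : (|y| + a) ^ 2 / 2 ≤ 2 * (y ^ 2 + a ^ 2) := by
    nlinarith [sq_abs y, sq_nonneg (|y| - a), abs_nonneg y]
  nlinarith [mul_le_mul_of_nonneg_left h3 hX, Real.exp_pos (-(1/4) * y ^ 2),
    sq_nonneg y, sq_nonneg a, c0_pos.le, Real.exp_pos (a ^ 2)]

lemma phi_sub_ge {a y t : ℝ} (ht : |t| ≤ a) : φ (|y| + a) ≤ φ (y - t) := by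
  apply phi_anti
  have h : |y - t| ≤ |y| + a := by
    calc |y - t| ≤ |y| + |t| := abs_sub _ _
      _ ≤ |y| + a := by linarith
  calc (y - t) ^ 2 = |y - t| ^ 2 := (sq_abs _).symm
    _ ≤ (|y| + a) ^ 2 := by nlinarith [abs_nonneg (y - t)]

lemma phi_self_ge {a : ℝ} (ha : 0 ≤ a) (y : ℝ) : φ (|y| + a) ≤ φ y := by
  apply phi_anti
  nlinarith [sq_abs y, abs_nonneg y]

lemma phi_decay {a y t : ℝ} (ha : 0 ≤ a) (ht : |t| ≤ a) :
    φ (y - t) ≤ (Real.sqrt (2 * π))⁻¹ * Real.exp (a ^ 2) * Real.exp (-(1/4) * y ^ 2) := by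
  unfold φ
  rw [mul_assoc, ← Real.exp_add]
  apply mul_le_mul_of_nonneg_left _ c0_pos.le
  apply Real.exp_le_exp.2
  have h1 : t * y ≤ a * |y| := by
    calc t * y ≤ |t * y| := le_abs_self _
      _ = |t| * |y| := abs_mul _ _
      _ ≤ a * |y| := mul_le_mul_of_nonneg_right ht (abs_nonneg _)
  have h2 : a * |y| ≤ a ^ 2 + y ^ 2 / 4 := by nlinarith [sq_nonneg (a - |y| / 2), sq_abs y]
  nlinarith [sq_nonneg t]

lemma phi_self_decay {a : ℝ} (ha : 0 ≤ a) (y : ℝ) :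
    φ y ≤ (Real.sqrt (2 * π))⁻¹ * Real.exp (a ^ 2) * Real.exp (-(1/4) * y ^ 2) := by
  have := phi_decay (a := a) (y := y) (t := 0) ha (by simpa using ha)
  simpa using this

lemma hdom_nonneg (a y : ℝ) : 0 ≤ hdom a y := by unfold hdom; positivity

lemma hdom_integrable (a : ℝ) : Integrable (hdom a) := by
  have I1 : Integrable (fun y : ℝ => y ^ (2:ℕ) * Real.exp (-(1/4) * y ^ 2)) := by
    have := integrable_rpow_mul_exp_neg_mul_sq (b := 1/4) (by norm_num) (s := 2) (by norm_num)
    refine this.congr ?_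
    filter_upwards with y
    rw [show ((2:ℝ) = ((2:ℕ):ℝ)) by norm_num, Real.rpow_natCast]
  have I2 : Integrable (fun y : ℝ => Real.exp (-(1/4) * y ^ 2)) :=
    integrable_exp_neg_mul_sq (by norm_num)
  have h : hdom a = fun y =>
      (2 * (Real.sqrt (2 * π))⁻¹ * Real.exp (a ^ 2)) * (y ^ (2:ℕ) * Real.exp (-(1/4) * y ^ 2))
      + (2 * (Real.sqrt (2 * π))⁻¹ * Real.exp (a ^ 2) * a ^ 2) * Real.exp (-(1/4) * y ^ 2) := by
    funext y; unfold hdom; ring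
  rw [h]
  exact (I1.const_mul _).add (I2.const_mul _)

/-- log-sum inequality specialised to the case where the first components agree. -/
lemma logsum {a c d : ℝ} (ha : 0 ≤ a) (hc : 0 < c) (hd : 0 < d) :
    (a + c) * Real.log ((a + c) / (a + d)) ≤ c * Real.log (c / d) := by
  have had : 0 < a + d := by linarith
  have key := Real.convexOn_mul_log.2 (show (1:ℝ) ∈ Ici (0:ℝ) by norm_num)
    (show c / d ∈ Ici (0:ℝ) from mem_Ici.2 (div_pos hc hd).le)
    (show (0:ℝ) ≤ a / (a + d) by positivity)
    (show (0:ℝ) ≤ d / (a + d) by positivity)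
    (show a / (a + d) + d / (a + d) = 1 by
      rw [← add_div, div_self had.ne'])
  simp only [smul_eq_mul, Real.log_one, mul_one, mul_zero, add_zero, one_mul] at key
  have harg : a / (a + d) + d / (a + d) * (c / d) = (a + c) / (a + d) := by
    field_simp
  rw [harg] at key
  have key2 := mul_le_mul_of_nonneg_left key had.le
  have hL : (a + d) * ((a + c) / (a + d) * Real.log ((a + c) / (a + d)))
      = (a + c) * Real.log ((a + c) / (a + d)) := by
    field_simp
  have hR : (a + d) * (d / (a + d) * (c / d * Real.log (c / d)))
      = c * Real.log (c / d) := by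
    field_simp
  rw [zero_add] at key2
  rw [hL, hR] at key2
  exact key2

/-! ### Measure-level lemmas -/

lemma ae_mem_Icc (a : ℝ) (F : Measure ℝ) [IsProbabilityMeasure F]
    (hsupp : F (Icc (-a) a) = 1) : ∀ᵐ s ∂F, s ∈ Icc (-a) a := by
  have : Icc (-a) a ∈ ae F := (mem_ae_iff_prob_eq_one measurableSet_Icc).2 hsupp
  exact this

lemma int_phi_sub (F : Measure ℝ) [IsProbabilityMeasure F] (y : ℝ) :
    Integrable (fun s => φ (y - s)) F := by
  apply Integrable.mono' (integrable_const ((Real.sqrt (2 * π))⁻¹))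
  · exact (phi_cont.comp (continuous_const.sub continuous_id)).aestronglyMeasurable
  · filter_upwards with s
    rw [Real.norm_eq_abs, abs_of_pos (phi_pos _)]
    exact phi_le _

lemma gb_le (F : Measure ℝ) [IsProbabilityMeasure F] (y : ℝ) :
    ∫ s, φ (y - s) ∂F ≤ (Real.sqrt (2 * π))⁻¹ := by
  calc ∫ s, φ (y - s) ∂F ≤ ∫ _, (Real.sqrt (2 * π))⁻¹ ∂F :=
        integral_mono (int_phi_sub F y) (integrable_const _) fun s => phi_le _
    _ = (Real.sqrt (2 * π))⁻¹ := by simp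

lemma gb_ge (a : ℝ) (F : Measure ℝ) [IsProbabilityMeasure F]
    (hsupp : F (Icc (-a) a) = 1) (y : ℝ) :
    φ (|y| + a) ≤ ∫ s, φ (y - s) ∂F := by
  have h : ∀ᵐ s ∂F, φ (|y| + a) ≤ φ (y - s) := by
    filter_upwards [ae_mem_Icc a F hsupp] with s hs
    exact phi_sub_ge (abs_le.2 ⟨hs.1, hs.2⟩)
  calc φ (|y| + a) = ∫ _, φ (|y| + a) ∂F := by simp
    _ ≤ ∫ s, φ (y - s) ∂F := integral_mono_ae (integrable_const _) (int_phi_sub F y) h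

lemma gb_sm (F : Measure ℝ) [SFinite F] :
    StronglyMeasurable (fun y : ℝ => ∫ s, φ (y - s) ∂F) := by
  have h : StronglyMeasurable (fun q : ℝ × ℝ => φ (q.1 - q.2)) :=
    (phi_cont.comp (continuous_fst.sub continuous_snd)).stronglyMeasurable
  exact h.integral_prod_right'

lemma mixbar_eq (p : ℝ) (F : Measure ℝ) [IsProbabilityMeasure F] (y : ℝ) :
    ∫ s, ((1 - p) * φ y + p * φ (y - s)) ∂F
      = (1 - p) * φ y + p * ∫ s, φ (y - s) ∂F := by
  rw [integral_add (integrable_const _) ((int_phi_sub F y).const_mul p)]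
  congr 1
  · simp
  · exact MeasureTheory.integral_const_mul p _

lemma gauss_integrand_bound (a : ℝ) (F : Measure ℝ) [IsProbabilityMeasure F]
    (hsupp : F (Icc (-a) a) = 1) (ha : 0 ≤ a) {t : ℝ} (ht : |t| ≤ a) (y : ℝ) :
    |φ (y - t) * Real.log (φ (y - t) / ∫ s, φ (y - s) ∂F)| ≤ hdom a y :=
  integrand_bound ha (phi_sub_ge ht) (phi_decay ha ht) (phi_le _)
    (gb_ge a F hsupp y) (gb_le F y)

lemma mix_integrand_bound (a p : ℝ) (F : Measure ℝ) [IsProbabilityMeasure F]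
    (hsupp : F (Icc (-a) a) = 1) (ha : 0 ≤ a) (hp0 : 0 ≤ p) (hp1 : p ≤ 1)
    {t : ℝ} (ht : |t| ≤ a) (y : ℝ) :
    |((1 - p) * φ y + p * φ (y - t)) *
        Real.log (((1 - p) * φ y + p * φ (y - t)) /
          ∫ s, ((1 - p) * φ y + p * φ (y - s)) ∂F)| ≤ hdom a y := by
  rw [mixbar_eq]
  have Hcomb : ∀ {A B C D : ℝ}, A ≤ C → B ≤ D →
      (1 - p) * A + p * B ≤ (1 - p) * C + p * D := fun hAC hBD =>
    add_le_add (mul_le_mul_of_nonneg_left hAC (by linarith))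
      (mul_le_mul_of_nonneg_left hBD hp0)
  apply integrand_bound ha
  · calc φ (|y| + a) = (1 - p) * φ (|y| + a) + p * φ (|y| + a) := by ring
      _ ≤ _ := Hcomb (phi_self_ge ha y) (phi_sub_ge ht)
  · calc (1 - p) * φ y + p * φ (y - t)
        ≤ (1 - p) * ((Real.sqrt (2 * π))⁻¹ * Real.exp (a ^ 2) * Real.exp (-(1/4) * y ^ 2))
          + p * ((Real.sqrt (2 * π))⁻¹ * Real.exp (a ^ 2) * Real.exp (-(1/4) * y ^ 2)) :=
          Hcomb (phi_self_decay ha y) (phi_decay ha ht)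
      _ = (Real.sqrt (2 * π))⁻¹ * Real.exp (a ^ 2) * Real.exp (-(1/4) * y ^ 2) := by ring
  · calc (1 - p) * φ y + p * φ (y - t)
        ≤ (1 - p) * (Real.sqrt (2 * π))⁻¹ + p * (Real.sqrt (2 * π))⁻¹ :=
          Hcomb (phi_le _) (phi_le _)
      _ = (Real.sqrt (2 * π))⁻¹ := by ring
  · calc φ (|y| + a) = (1 - p) * φ (|y| + a) + p * φ (|y| + a) := by ring
      _ ≤ _ := Hcomb (phi_self_ge ha y) (gb_ge a F hsupp y)
  · calc (1 - p) * φ y + p * ∫ s, φ (y - s) ∂F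
        ≤ (1 - p) * (Real.sqrt (2 * π))⁻¹ + p * (Real.sqrt (2 * π))⁻¹ :=
          Hcomb (phi_le _) (gb_le F y)
      _ = (Real.sqrt (2 * π))⁻¹ := by ring

lemma gauss_integrand_meas (F : Measure ℝ) [SFinite F] :
    Measurable (fun q : ℝ × ℝ =>
      φ (q.2 - q.1) * Real.log (φ (q.2 - q.1) / ∫ s, φ (q.2 - s) ∂F)) := by
  have m1 : Measurable fun q : ℝ × ℝ => φ (q.2 - q.1) :=
    (phi_cont.comp (continuous_snd.sub continuous_fst)).measurable
  have m2 : Measurable fun q : ℝ × ℝ => ∫ s, φ (q.2 - s) ∂F :=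
    ((gb_sm F).measurable).comp measurable_snd
  exact m1.mul (Real.measurable_log.comp (m1.div m2))

lemma mix_integrand_meas (p : ℝ) (F : Measure ℝ) [SFinite F] :
    Measurable (fun q : ℝ × ℝ =>
      ((1 - p) * φ q.2 + p * φ (q.2 - q.1)) *
        Real.log (((1 - p) * φ q.2 + p * φ (q.2 - q.1)) /
          ∫ s, ((1 - p) * φ q.2 + p * φ (q.2 - s)) ∂F)) := by
  have m1 : Measurable fun q : ℝ × ℝ => (1 - p) * φ q.2 + p * φ (q.2 - q.1) := by
    exact (((continuous_const.mul (phi_cont.comp continuous_snd)).add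
      (continuous_const.mul (phi_cont.comp (continuous_snd.sub continuous_fst))))).measurable
  have msm : StronglyMeasurable (fun q : ℝ × ℝ => (1 - p) * φ q.1 + p * φ (q.1 - q.2)) := by
    exact (((continuous_const.mul (phi_cont.comp continuous_fst)).add
      (continuous_const.mul (phi_cont.comp (continuous_fst.sub continuous_snd))))).stronglyMeasurable
  have m2 : Measurable fun q : ℝ × ℝ => ∫ s, ((1 - p) * φ q.2 + p * φ (q.2 - s)) ∂F :=
    (msm.integral_prod_right'.measurable).comp measurable_snd
  exact m1.mul (Real.measurable_log.comp (m1.div m2))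

lemma gauss_integrand_int (a : ℝ) (F : Measure ℝ) [IsProbabilityMeasure F]
    (hsupp : F (Icc (-a) a) = 1) (ha : 0 ≤ a) {t : ℝ} (ht : |t| ≤ a) :
    Integrable (fun y => φ (y - t) * Real.log (φ (y - t) / ∫ s, φ (y - s) ∂F)) := by
  apply Integrable.mono' (hdom_integrable a)
  · exact ((gauss_integrand_meas F).comp (measurable_prodMk_left (x := t))).aestronglyMeasurable
  · filter_upwards with y
    rw [Real.norm_eq_abs]
    exact gauss_integrand_bound a F hsupp ha ht y

lemma mix_integrand_int (a p : ℝ) (F : Measure ℝ) [IsProbabilityMeasure F]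
    (hsupp : F (Icc (-a) a) = 1) (ha : 0 ≤ a) (hp0 : 0 ≤ p) (hp1 : p ≤ 1)
    {t : ℝ} (ht : |t| ≤ a) :
    Integrable (fun y => ((1 - p) * φ y + p * φ (y - t)) *
      Real.log (((1 - p) * φ y + p * φ (y - t)) /
        ∫ s, ((1 - p) * φ y + p * φ (y - s)) ∂F)) := by
  apply Integrable.mono' (hdom_integrable a)
  · exact ((mix_integrand_meas p F).comp (measurable_prodMk_left (x := t))).aestronglyMeasurable
  · filter_upwards with y
    rw [Real.norm_eq_abs]
    exact mix_integrand_bound a p F hsupp ha hp0 hp1 ht y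

lemma inner_le (a p : ℝ) (F : Measure ℝ) [IsProbabilityMeasure F]
    (hsupp : F (Icc (-a) a) = 1) (ha : 0 ≤ a) (hp0 : 0 ≤ p) (hp1 : p ≤ 1)
    {t : ℝ} (ht : |t| ≤ a) :
    (∫ y : ℝ, ((1 - p) * φ y + p * φ (y - t)) *
        Real.log (((1 - p) * φ y + p * φ (y - t)) /
          ∫ s, ((1 - p) * φ y + p * φ (y - s)) ∂F))
      ≤ p * ∫ y : ℝ, φ (y - t) * Real.log (φ (y - t) / ∫ s, φ (y - s) ∂F) := by
  rw [← MeasureTheory.integral_const_mul]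
  apply integral_mono (mix_integrand_int a p F hsupp ha hp0 hp1 ht)
    ((gauss_integrand_int a F hsupp ha ht).const_mul p)
  intro y
  dsimp only
  rcases eq_or_lt_of_le hp0 with hp | hp
  · simp only [← hp, sub_zero, one_mul, zero_mul, add_zero, mul_zero, zero_mul]
    have : ∫ _, φ y ∂F = φ y := by simp
    rw [this, div_self (phi_pos y).ne', Real.log_one, mul_zero]
  · rw [mixbar_eq]
    have key := logsum (a := (1 - p) * φ y) (c := p * φ (y - t)) (d := p * ∫ s, φ (y - s) ∂F)
      (mul_nonneg (by linarith) (phi_pos y).le)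
      (mul_pos hp (phi_pos _))
      (mul_pos hp ((phi_pos (|y| + a)).trans_le (gb_ge a F hsupp y)))
    have harg : p * φ (y - t) / (p * ∫ s, φ (y - s) ∂F)
        = φ (y - t) / ∫ s, φ (y - s) ∂F := mul_div_mul_left _ _ hp.ne'
    rw [harg] at key
    calc ((1 - p) * φ y + p * φ (y - t)) *
          Real.log (((1 - p) * φ y + p * φ (y - t)) /
            ((1 - p) * φ y + p * ∫ s, φ (y - s) ∂F))
        ≤ p * φ (y - t) * Real.log (φ (y - t) / ∫ s, φ (y - s) ∂F) := key
      _ = p * (φ (y - t) * Real.log (φ (y - t) / ∫ s, φ (y - s) ∂F)) := by ring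

lemma Ig_sm (F : Measure ℝ) [SFinite F] :
    StronglyMeasurable (fun t : ℝ =>
      ∫ y : ℝ, φ (y - t) * Real.log (φ (y - t) / ∫ s, φ (y - s) ∂F)) :=
  (gauss_integrand_meas F).stronglyMeasurable.integral_prod_right'

lemma Imix_sm (p : ℝ) (F : Measure ℝ) [SFinite F] :
    StronglyMeasurable (fun t : ℝ =>
      ∫ y : ℝ, ((1 - p) * φ y + p * φ (y - t)) *
        Real.log (((1 - p) * φ y + p * φ (y - t)) /
          ∫ s, ((1 - p) * φ y + p * φ (y - s)) ∂F)) :=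
  (mix_integrand_meas p F).stronglyMeasurable.integral_prod_right'

lemma Ig_abs_le (a : ℝ) (F : Measure ℝ) [IsProbabilityMeasure F]
    (hsupp : F (Icc (-a) a) = 1) (ha : 0 ≤ a) {t : ℝ} (ht : |t| ≤ a) :
    |∫ y : ℝ, φ (y - t) * Real.log (φ (y - t) / ∫ s, φ (y - s) ∂F)|
      ≤ ∫ y, hdom a y := by
  rw [← Real.norm_eq_abs]
  refine (norm_integral_le_integral_norm _).trans ?_
  apply integral_mono (gauss_integrand_int a F hsupp ha ht).norm (hdom_integrable a)
  intro y
  dsimp only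
  rw [Real.norm_eq_abs]
  exact gauss_integrand_bound a F hsupp ha ht y

lemma Imix_abs_le (a p : ℝ) (F : Measure ℝ) [IsProbabilityMeasure F]
    (hsupp : F (Icc (-a) a) = 1) (ha : 0 ≤ a) (hp0 : 0 ≤ p) (hp1 : p ≤ 1)
    {t : ℝ} (ht : |t| ≤ a) :
    |∫ y : ℝ, ((1 - p) * φ y + p * φ (y - t)) *
        Real.log (((1 - p) * φ y + p * φ (y - t)) /
          ∫ s, ((1 - p) * φ y + p * φ (y - s)) ∂F)| ≤ ∫ y, hdom a y := by
  rw [← Real.norm_eq_abs]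
  refine (norm_integral_le_integral_norm _).trans ?_
  apply integral_mono (mix_integrand_int a p F hsupp ha hp0 hp1 ht).norm
    (hdom_integrable a)
  intro y
  dsimp only
  rw [Real.norm_eq_abs]
  exact mix_integrand_bound a p F hsupp ha hp0 hp1 ht y

lemma IntIg (a : ℝ) (F : Measure ℝ) [IsProbabilityMeasure F]
    (hsupp : F (Icc (-a) a) = 1) (ha : 0 ≤ a) :
    Integrable (fun t : ℝ =>
      ∫ y : ℝ, φ (y - t) * Real.log (φ (y - t) / ∫ s, φ (y - s) ∂F)) F := by
  apply Integrable.mono' (integrable_const (∫ y, hdom a y))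
    (Ig_sm F).aestronglyMeasurable
  filter_upwards [ae_mem_Icc a F hsupp] with t htmem
  rw [Real.norm_eq_abs]
  exact Ig_abs_le a F hsupp ha (abs_le.2 ⟨htmem.1, htmem.2⟩)

lemma IntImix (a p : ℝ) (F : Measure ℝ) [IsProbabilityMeasure F]
    (hsupp : F (Icc (-a) a) = 1) (ha : 0 ≤ a) (hp0 : 0 ≤ p) (hp1 : p ≤ 1) :
    Integrable (fun t : ℝ =>
      ∫ y : ℝ, ((1 - p) * φ y + p * φ (y - t)) *
        Real.log (((1 - p) * φ y + p * φ (y - t)) /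
          ∫ s, ((1 - p) * φ y + p * φ (y - s)) ∂F)) F := by
  apply Integrable.mono' (integrable_const (∫ y, hdom a y))
    (Imix_sm p F).aestronglyMeasurable
  filter_upwards [ae_mem_Icc a F hsupp] with t htmem
  rw [Real.norm_eq_abs]
  exact Imix_abs_le a p F hsupp ha hp0 hp1 (abs_le.2 ⟨htmem.1, htmem.2⟩)

lemma MI_mix_le (a p : ℝ) (F : Measure ℝ) [IsProbabilityMeasure F]
    (hsupp : F (Icc (-a) a) = 1) (ha : 0 ≤ a) (hp0 : 0 ≤ p) (hp1 : p ≤ 1) :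
    MI F (fun y t => (1 - p) * φ y + p * φ (y - t))
      ≤ p * MI F (fun y t => φ (y - t)) := by
  simp only [MI]
  rw [← MeasureTheory.integral_const_mul]
  apply integral_mono_ae (IntImix a p F hsupp ha hp0 hp1)
    ((IntIg a F hsupp ha).const_mul p)
  filter_upwards [ae_mem_Icc a F hsupp] with t htmem
  exact inner_le a p F hsupp ha hp0 hp1 (abs_le.2 ⟨htmem.1, htmem.2⟩)

lemma MI_gauss_le (a : ℝ) (F : Measure ℝ) [IsProbabilityMeasure F]
    (hsupp : F (Icc (-a) a) = 1) (ha : 0 ≤ a) :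
    MI F (fun y t => φ (y - t)) ≤ ∫ y, hdom a y := by
  simp only [MI]
  have h := norm_integral_le_of_norm_le_const (μ := F)
    (f := fun t : ℝ => ∫ y : ℝ, φ (y - t) * Real.log (φ (y - t) / ∫ s, φ (y - s) ∂F))
    (C := ∫ y, hdom a y) ?_
  · rw [probReal_univ] at h
    simp only [ENNReal.toReal_one, mul_one, Real.norm_eq_abs] at h
    exact (le_abs_self _).trans h
  · filter_upwards [ae_mem_Icc a F hsupp] with t htmem
    rw [Real.norm_eq_abs]
    exact Ig_abs_le a F hsupp ha (abs_le.2 ⟨htmem.1, htmem.2⟩)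

lemma smith_bdd (a : ℝ) (ha : 0 ≤ a) :
    ∀ x ∈ {x : ℝ | ∃ F : Measure ℝ, IsProbabilityMeasure F ∧ F (Icc (-a) a) = 1 ∧
      x = MI F (fun y t => φ (y - t))}, x ≤ ∫ y, hdom a y := by
  rintro x ⟨F, hF, hs, rfl⟩
  haveI := hF
  exact MI_gauss_le a F hs ha

lemma zero_mem_smith (a : ℝ) (ha : 0 ≤ a) :
    (0 : ℝ) ∈ {x : ℝ | ∃ F : Measure ℝ, IsProbabilityMeasure F ∧ F (Icc (-a) a) = 1 ∧
      x = MI F (fun y t => φ (y - t))} := by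
  refine ⟨Measure.dirac 0, inferInstance, ?_, ?_⟩
  · rw [Measure.dirac_apply_of_mem]
    exact ⟨neg_nonpos.2 ha, ha⟩
  · have hz : ∀ y : ℝ, φ (y - 0) * Real.log (φ (y - 0) /
        ∫ s, φ (y - s) ∂(Measure.dirac (0:ℝ))) = 0 := by
      intro y
      rw [integral_dirac, sub_zero, div_self (phi_pos y).ne', Real.log_one, mul_zero]
    simp only [MI]
    rw [integral_dirac]
    simp only [hz, integral_zero]

lemma CSm_nonneg (a : ℝ) (ha : 0 ≤ a) : 0 ≤ CSm a :=
  le_csSup ⟨∫ y, hdom a y, smith_bdd a ha⟩ (zero_mem_smith a ha)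

/-- For the on-off channel, the capacity with causal transmitter side information is
upper bounded by `p_on · C_Sm(√E)`. -/
theorem onoff_capacity_upper_bound (E pon : ℝ) (hE : 0 ≤ E)
    (hpon : pon ∈ Icc (0:ℝ) 1) :
    sSup {x : ℝ | ∃ F : Measure ℝ, IsProbabilityMeasure F ∧
        F (Icc (-Real.sqrt E) (Real.sqrt E)) = 1 ∧
        x = MI F (fun y t => (1 - pon) * φ y + pon * φ (y - t))} ≤
      pon * CSm (Real.sqrt E) := by
  set a := Real.sqrt E with ha_def
  have ha : 0 ≤ a := Real.sqrt_nonneg E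
  obtain ⟨hp0, hp1⟩ := hpon
  apply Real.sSup_le
  · rintro x ⟨F, hF, hsupp, rfl⟩
    haveI := hF
    calc MI F (fun y t => (1 - pon) * φ y + pon * φ (y - t))
        ≤ pon * MI F (fun y t => φ (y - t)) := MI_mix_le a pon F hsupp ha hp0 hp1
      _ ≤ pon * CSm a := by
          apply mul_le_mul_of_nonneg_left _ hp0
          exact le_csSup ⟨∫ y, hdom a y, smith_bdd a ha⟩ ⟨F, hF, hsupp, rfl⟩
  · exact mul_nonneg hp0 (CSm_nonneg a ha)
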